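/- Let C ⊆ F_2^n be an even binary linear code and β ∈ F_2^n. Let C_β = {γ ∈ C : supp(γ) ⊆ supp(β)}, let R = {x ∈ C_β : ⟨x,y⟩ = 0 for all y ∈ C_β} be the radical of C_β, and let H be a maximal self-orthogonal subcode of C_β. Then C_β + H^{⊥_β} = R^{⊥_β}; in particular C + H^{⊥_β} = C + R^{⊥_β} is independent of the choice of the maximal self-orthogonal subcode H. -/

import Mathlib

/-- The weight of a binary vector: the number of nonzero coordinates. -/
def wt {n : ℕ} (α : Fin n → ZMod 2) : ℕ :=
  (Finset.univ.filter (fun i => α i ≠ 0)).card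

/-- The standard bilinear form `⟨α,β⟩ = ∑ i, α i * β i` on `F_2^n`. -/
def ip {n : ℕ} (α β : Fin n → ZMod 2) : ZMod 2 := ∑ i, α i * β i

/-- The support of a binary vector. -/
def supp {n : ℕ} (α : Fin n → ZMod 2) : Set (Fin n) := {i | α i ≠ 0}

/-- `H^{⊥_β}`: vectors with support inside `supp β` orthogonal to every element of `H`. -/
def perpWrt {n : ℕ} (β : Fin n → ZMod 2) (H : Set (Fin n → ZMod 2)) :
    Set (Fin n → ZMod 2) :=
  {δ | supp δ ⊆ supp β ∧ ∀ h ∈ H, ip δ h = 0}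

namespace Stmt3Aux

lemma ip_comm {n : ℕ} (x y : Fin n → ZMod 2) : ip x y = ip y x :=
  Finset.sum_congr rfl (fun i _ => mul_comm _ _)

lemma ip_add_left {n : ℕ} (x y z : Fin n → ZMod 2) :
    ip (x + y) z = ip x z + ip y z := by
  simp [ip, add_mul, Finset.sum_add_distrib]

lemma ip_add_right {n : ℕ} (x y z : Fin n → ZMod 2) :
    ip x (y + z) = ip x y + ip x z := by
  simp [ip, mul_add, Finset.sum_add_distrib]

lemma supp_add {n : ℕ} (x y : Fin n → ZMod 2) :
    supp (x + y) ⊆ supp x ∪ supp y := by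
  intro i hi
  by_contra h
  simp only [Set.mem_union, supp, Set.mem_setOf_eq, not_or, not_not] at h
  simp only [supp, Set.mem_setOf_eq, Pi.add_apply, h.1, h.2, add_zero,
    ne_eq, not_true_eq_false] at hi

/-- The subspace of vectors supported inside `supp β`. -/
def Vsub {n : ℕ} (β : Fin n → ZMod 2) : Submodule (ZMod 2) (Fin n → ZMod 2) where
  carrier := {v | supp v ⊆ supp β}
  zero_mem' := by intro i hi; simp [supp] at hi
  add_mem' := by
    intro a b ha hb
    exact fun i hi => (supp_add a b hi).elim (fun h => ha h) (fun h => hb h)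
  smul_mem' := by
    intro c x hx i hi
    apply hx
    simp only [supp, Set.mem_setOf_eq, Pi.smul_apply, smul_eq_mul] at hi ⊢
    intro h
    rw [h, mul_zero] at hi
    exact hi rfl

/-- The dot-product bilinear form on `Vsub β`. -/
def Bform {n : ℕ} (β : Fin n → ZMod 2) : LinearMap.BilinForm (ZMod 2) (Vsub β) :=
  LinearMap.mk₂ (ZMod 2) (fun x y => ip x.1 y.1)
    (fun x y z => by simpa using ip_add_left x.1 y.1 z.1)
    (fun c x y => by
      simp only [Submodule.coe_smul, smul_eq_mul, ip, Pi.smul_apply, Finset.mul_sum, mul_assoc])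
    (fun x y z => by simpa using ip_add_right x.1 y.1 z.1)
    (fun c x y => by
      simp only [Submodule.coe_smul, smul_eq_mul, ip, Pi.smul_apply, Finset.mul_sum]
      exact Finset.sum_congr rfl fun i _ => by ring)

@[simp] lemma Bform_apply {n : ℕ} (β : Fin n → ZMod 2) (x y : Vsub β) :
    Bform β x y = ip x.1 y.1 := rfl

lemma Bform_refl {n : ℕ} (β : Fin n → ZMod 2) : (Bform β).IsRefl := by
  intro x y h
  simpa [ip_comm y.1 x.1] using h

lemma Bform_nondeg {n : ℕ} (β : Fin n → ZMod 2) : (Bform β).Nondegenerate := by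
  refine (LinearMap.IsRefl.nondegenerate_iff_separatingLeft (Bform_refl β)).mpr ?_
  intro v hv
  ext i
  by_contra h
  have hi : i ∈ supp β := v.2 h
  have hw : (Pi.single i (1 : ZMod 2)) ∈ Vsub β := by
    intro j hj
    rcases eq_or_ne j i with rfl | hne
    · exact hi
    · exact absurd (Pi.single_eq_of_ne hne 1) hj
  have h0 : ip (v : Fin n → ZMod 2) (Pi.single i 1) = 0 := hv ⟨Pi.single i 1, hw⟩
  apply h
  show (v : Fin n → ZMod 2) i = (0 : Vsub β).1 i
  rw [ip] at h0
  rw [Finset.sum_eq_single i (fun j _ hj => by rw [Pi.single_eq_of_ne hj, mul_zero])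
    (fun hni => absurd (Finset.mem_univ i) hni), Pi.single_eq_same, mul_one] at h0
  simpa using h0

lemma perp_image {n : ℕ} (β : Fin n → ZMod 2) (N : Submodule (ZMod 2) (Vsub β))
    (S : Set (Fin n → ZMod 2)) (hS : S = Subtype.val '' (N : Set (Vsub β))) :
    perpWrt β S = Subtype.val '' ((Bform β).orthogonal N : Set (Vsub β)) := by
  ext x
  constructor
  · rintro ⟨hs, ho⟩
    refine ⟨⟨x, hs⟩, ?_, rfl⟩
    intro u hu
    show Bform β u ⟨x, hs⟩ = 0
    rw [Bform_apply, ip_comm]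
    exact ho u.1 (hS ▸ ⟨u, hu, rfl⟩)
  · rintro ⟨v, hv, rfl⟩
    refine ⟨v.2, ?_⟩
    intro h hh
    rw [hS] at hh
    obtain ⟨u, hu, rfl⟩ := hh
    exact (ip_comm v.1 u.1).trans (hv u hu)

lemma sum_image {n : ℕ} (β : Fin n → ZMod 2) (P Q : Submodule (ZMod 2) (Vsub β)) :
    {x | ∃ a ∈ Subtype.val '' (P : Set (Vsub β)),
        ∃ b ∈ Subtype.val '' (Q : Set (Vsub β)), x = a + b} =
      Subtype.val '' ((P ⊔ Q : Submodule (ZMod 2) (Vsub β)) : Set (Vsub β)) := by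
  ext x
  constructor
  · rintro ⟨a, ⟨u, hu, rfl⟩, b, ⟨w, hw, rfl⟩, rfl⟩
    exact ⟨u + w, Submodule.add_mem_sup hu hw, rfl⟩
  · rintro ⟨v, hv, rfl⟩
    obtain ⟨y, hy, z, hz, rfl⟩ := Submodule.mem_sup.mp hv
    exact ⟨y, ⟨y, hy, rfl⟩, z, ⟨z, hz, rfl⟩, rfl⟩

end Stmt3Aux

open Stmt3Aux LinearMap.BilinForm in
theorem stmt3 {n : ℕ} (C : Submodule (ZMod 2) (Fin n → ZMod 2))
    (hCeven : ∀ x ∈ C, 2 ∣ wt x) (β : Fin n → ZMod 2)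
    (Cβ : Set (Fin n → ZMod 2)) (hCβ : Cβ = {γ | γ ∈ C ∧ supp γ ⊆ supp β})
    (R : Set (Fin n → ZMod 2)) (hR : R = {x | x ∈ Cβ ∧ ∀ y ∈ Cβ, ip x y = 0})
    (H : Submodule (ZMod 2) (Fin n → ZMod 2))
    (hHsub : (H : Set (Fin n → ZMod 2)) ⊆ Cβ)
    (hHso : ∀ x ∈ H, ∀ y ∈ H, ip x y = 0)
    (hHmax : ∀ K : Submodule (ZMod 2) (Fin n → ZMod 2),
      (K : Set (Fin n → ZMod 2)) ⊆ Cβ → (∀ x ∈ K, ∀ y ∈ K, ip x y = 0) → H ≤ K → K = H) :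
    {x | ∃ a ∈ Cβ, ∃ b ∈ perpWrt β (H : Set (Fin n → ZMod 2)), x = a + b} = perpWrt β R ∧
    {x | ∃ a ∈ (C : Set (Fin n → ZMod 2)),
        ∃ b ∈ perpWrt β (H : Set (Fin n → ZMod 2)), x = a + b} =
      {x | ∃ a ∈ (C : Set (Fin n → ZMod 2)), ∃ b ∈ perpWrt β R, x = a + b} := by
  set V := Vsub β with hV
  set B := Bform β with hB
  set CB : Submodule (ZMod 2) V := C.comap V.subtype with hCBdef
  set HB : Submodule (ZMod 2) V := H.comap V.subtype with hHBdef
  set RB : Submodule (ZMod 2) V := CB ⊓ B.orthogonal CB with hRBdef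
  -- membership in Cβ
  have hCβmem : ∀ x, x ∈ Cβ ↔ x ∈ C ∧ supp x ⊆ supp β := by
    intro x; rw [hCβ]; exact Iff.rfl
  have hCβim : Cβ = Subtype.val '' (CB : Set V) := by
    ext x
    constructor
    · intro hx
      obtain ⟨h1, h2⟩ := (hCβmem x).mp hx
      exact ⟨⟨x, h2⟩, h1, rfl⟩
    · rintro ⟨⟨v, hv⟩, hvC, rfl⟩
      exact (hCβmem v).mpr ⟨hvC, hv⟩
  have hHV : ∀ x ∈ H, supp x ⊆ supp β := fun x hx => ((hCβmem x).mp (hHsub hx)).2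
  have hHim : (H : Set (Fin n → ZMod 2)) = Subtype.val '' (HB : Set V) := by
    ext x
    constructor
    · intro hx
      exact ⟨⟨x, hHV x hx⟩, hx, rfl⟩
    · rintro ⟨⟨v, hv⟩, hvH, rfl⟩
      exact hvH
  have hRim : R = Subtype.val '' (RB : Set V) := by
    ext x
    constructor
    · intro hx
      rw [hR] at hx
      obtain ⟨hx1, hx2⟩ := hx
      obtain ⟨h1, h2⟩ := (hCβmem x).mp hx1
      refine ⟨⟨x, h2⟩, ⟨h1, ?_⟩, rfl⟩
      intro u hu
      show B u ⟨x, h2⟩ = 0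
      rw [hB, Bform_apply, ip_comm]
      exact hx2 u.1 ((hCβmem u.1).mpr ⟨hu, u.2⟩)
    · rintro ⟨⟨v, hv⟩, ⟨hv1, hv2⟩, rfl⟩
      rw [hR]
      refine ⟨(hCβmem v).mpr ⟨hv1, hv⟩, ?_⟩
      intro y hy
      obtain ⟨hy1, hy2⟩ := (hCβmem y).mp hy
      exact (ip_comm v y).trans (hv2 ⟨y, hy2⟩ hy1)
  -- R ⊆ H via maximality
  have hRH : R ⊆ (H : Set (Fin n → ZMod 2)) := by
    set K : Submodule (ZMod 2) (Fin n → ZMod 2) := H ⊔ RB.map V.subtype with hKdef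
    have hRsub : ∀ x ∈ RB.map V.subtype, x ∈ R := by
      rintro x ⟨v, hv, rfl⟩
      rw [hRim]
      exact ⟨v, hv, rfl⟩
    have hKC : (K : Set (Fin n → ZMod 2)) ⊆ Cβ := by
      intro x hx
      obtain ⟨h, hh, r, hr, rfl⟩ := Submodule.mem_sup.mp hx
      have hhC := (hCβmem h).mp (hHsub hh)
      have hrC := (hCβmem r).mp ((hR ▸ hRsub r hr).1)
      refine (hCβmem _).mpr ⟨C.add_mem hhC.1 hrC.1, ?_⟩
      exact fun i hi => (supp_add h r hi).elim (fun t => hhC.2 t) (fun t => hrC.2 t)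
    have hKso : ∀ x ∈ K, ∀ y ∈ K, ip x y = 0 := by
      intro x hx y hy
      obtain ⟨h1, hh1, r1, hr1, rfl⟩ := Submodule.mem_sup.mp hx
      obtain ⟨h2, hh2, r2, hr2, rfl⟩ := Submodule.mem_sup.mp hy
      have hr1R := hR ▸ hRsub r1 hr1
      have hr2R := hR ▸ hRsub r2 hr2
      rw [ip_add_left, ip_add_right, ip_add_right]
      have e1 : ip h1 h2 = 0 := hHso h1 hh1 h2 hh2
      have e2 : ip h1 r2 = 0 := by rw [ip_comm]; exact hr2R.2 h1 (hHsub hh1)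
      have e3 : ip r1 h2 = 0 := hr1R.2 h2 (hHsub hh2)
      have e4 : ip r1 r2 = 0 := hr1R.2 r2 hr2R.1
      rw [e1, e2, e3, e4]; ring
    have hKH : K = H := hHmax K hKC hKso le_sup_left
    intro r hr
    rw [hRim] at hr
    obtain ⟨v, hv, rfl⟩ := hr
    have : (v : Fin n → ZMod 2) ∈ K := Submodule.mem_sup_right (Submodule.mem_map_of_mem hv)
    rwa [hKH] at this
  have hRBHB : RB ≤ HB := by
    intro v hv
    have : (v : Fin n → ZMod 2) ∈ R := by rw [hRim]; exact ⟨v, hv, rfl⟩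
    exact hRH this
  have hHBCB : HB ≤ CB := by
    intro v hv
    exact ((hCβmem v.1).mp (hHsub hv)).1
  -- key submodule identity
  have hnd := Bform_nondeg β
  have hrefl := Bform_refl β
  have hdm : B.orthogonal (CB ⊔ B.orthogonal HB) =
      B.orthogonal CB ⊓ B.orthogonal (B.orthogonal HB) := by
    apply le_antisymm
    · exact le_inf (orthogonal_le le_sup_left) (orthogonal_le le_sup_right)
    · rintro m ⟨h1, h2⟩ u hu
      obtain ⟨y, hy, z, hz, rfl⟩ := Submodule.mem_sup.mp hu
      show B (y + z) m = 0
      rw [map_add, LinearMap.add_apply, h1 y hy, h2 z hz, add_zero]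
  have hkey : CB ⊔ B.orthogonal HB = B.orthogonal RB := by
    have h1 : B.orthogonal (CB ⊔ B.orthogonal HB) = RB := by
      rw [hdm, orthogonal_orthogonal hnd hrefl]
      apply le_antisymm
      · exact le_inf (inf_le_right.trans hHBCB) inf_le_left
      · exact le_inf inf_le_right hRBHB
    calc CB ⊔ B.orthogonal HB
        = B.orthogonal (B.orthogonal (CB ⊔ B.orthogonal HB)) :=
          (orthogonal_orthogonal hnd hrefl _).symm
      _ = B.orthogonal RB := by rw [h1]
  have hperpH : perpWrt β (H : Set (Fin n → ZMod 2)) =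
      Subtype.val '' (B.orthogonal HB : Set V) := perp_image β HB _ hHim
  have hperpR : perpWrt β R = Subtype.val '' (B.orthogonal RB : Set V) :=
    perp_image β RB _ hRim
  have part1 : {x | ∃ a ∈ Cβ, ∃ b ∈ perpWrt β (H : Set (Fin n → ZMod 2)), x = a + b}
      = perpWrt β R := by
    rw [hCβim, hperpH, sum_image, hkey, hperpR]
  refine ⟨part1, ?_⟩
  ext x
  constructor
  · rintro ⟨a, haC, b, hb, rfl⟩
    refine ⟨a, haC, b, ⟨hb.1, ?_⟩, rfl⟩
    intro r hr
    exact hb.2 r (hRH hr)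
  · rintro ⟨a, haC, b, hb, rfl⟩
    have hb' : b ∈ {x | ∃ a ∈ Cβ, ∃ b ∈ perpWrt β (H : Set (Fin n → ZMod 2)), x = a + b} :=
      part1 ▸ hb
    obtain ⟨c, hc, d, hd, rfl⟩ := hb'
    exact ⟨a + c, C.add_mem haC ((hCβmem c).mp hc).1, d, hd, (add_assoc a c d).symm⟩
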